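/- Let 𝒢 := ((ℌ_n, ω_n))_{n∈ℕ*} be a *-fusion frame of a Hilbert 𝔄-module ℌ. Then the analysis operator 𝒮_𝒢 : ℌ → ℌ, x ↦ ∑_{n=1}^∞ ω_n² P_{ℌ_n}(x), is well-defined (the series converges in ℌ for every x), bounded, 𝔄-linear, self-adjoint, and positive; indeed 𝒮_𝒢 = 𝒯_𝒢* 𝒯_𝒢, where 𝒯_𝒢 : ℌ → l₂(ℌ) is the synthesis operator x ↦ (ω_n P_{ℌ_n}(x))_n. -/

import Mathlib

open scoped InnerProductSpace RightActions

/-- The December 2024 Mathlib `CStarModule` (right `𝔄`-module via `𝔄ᵐᵒᵖ`, inner product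
`𝔄`-linear on the right: `⟪x, y <• a⟫ = ⟪x, y⟫ * a`), whose meaning Mathlib has since changed. -/
class CStarModuleRight (A E : Type*) [NonUnitalSemiring A] [StarRing A] [Module ℂ A]
    [AddCommGroup E] [Module ℂ E] [PartialOrder A] [SMul Aᵐᵒᵖ E] [Norm A] [Norm E]
    extends Inner A E where
  inner_add_right {x} {y} {z} : inner x (y + z) = inner x y + inner x z
  inner_self_nonneg {x} : 0 ≤ inner x x
  inner_self {x} : inner x x = 0 ↔ x = 0
  inner_op_smul_right {a : A} {x y : E} : inner x (y <• a) = inner x y * a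
  inner_smul_right_complex {z : ℂ} {x} {y} : inner x (z • y) = z • inner x y
  star_inner x y : star (inner x y) = inner y x
  norm_eq_sqrt_norm_inner_self x : ‖x‖ = √‖inner x x‖

variable {𝔄 : Type*} [CStarAlgebra 𝔄] [PartialOrder 𝔄] [StarOrderedRing 𝔄]
variable {H : Type*} [NormedAddCommGroup H] [NormedSpace ℂ H] [Module 𝔄ᵐᵒᵖ H]
  [CStarModuleRight 𝔄 H] [CompleteSpace H]

/-- An element of a C*-algebra is *strictly positive* if it is positive and invertible. -/
def IsStrictlyPositive' (a : 𝔄) : Prop := 0 ≤ a ∧ IsUnit a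

/-- A *weight* of the C*-algebra `𝔄` is a sequence of central strictly positive elements. -/
def IsWeight (ω : ℕ → 𝔄) : Prop :=
  ∀ n, ω n ∈ Set.center 𝔄 ∧ IsStrictlyPositive' (ω n)

/-- `P` is the orthogonal projection of the Hilbert `𝔄`-module `H` onto the orthogonally
complemented submodule `K`: a bounded `𝔄`-linear idempotent which is self-adjoint with
respect to the `𝔄`-valued inner product and has range `K`. -/
def IsOrthoProjectionOnto (P : H →L[ℂ] H) (K : Submodule 𝔄ᵐᵒᵖ H) : Prop :=
  (∀ (a : 𝔄) (x : H), P (x <• a) = (P x) <• a) ∧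
  (∀ x, P (P x) = P x) ∧
  (∀ x y : H, ⟪P x, y⟫_𝔄 = ⟪x, P y⟫_𝔄) ∧
  (∀ x, P x ∈ K) ∧ (∀ x ∈ K, P x = x)

/-- The weighted sequence of orthogonally complemented submodules whose orthogonal
projections are `P n` is a *-fusion frame of `H` with lower bound `A` and upper bound `B`. -/
def IsFusionFrameWith (P : ℕ → H →L[ℂ] H) (ω : ℕ → 𝔄) (A B : 𝔄) : Prop :=
  IsStrictlyPositive' A ∧ IsStrictlyPositive' B ∧
  ∀ x : H, Summable (fun n => ω n ^ 2 * ⟪P n x, P n x⟫_𝔄) ∧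
    ⟪x <• A, x <• A⟫_𝔄 ≤ ∑' n, ω n ^ 2 * ⟪P n x, P n x⟫_𝔄 ∧
    (∑' n, ω n ^ 2 * ⟪P n x, P n x⟫_𝔄) ≤ ⟪x <• B, x <• B⟫_𝔄

/-- A *-fusion frame (with some pair of strictly positive bounds). -/
def IsFusionFrame (P : ℕ → H →L[ℂ] H) (ω : ℕ → 𝔄) : Prop :=
  ∃ A B : 𝔄, IsFusionFrameWith P ω A B

set_option linter.unusedSectionVars false
set_option maxHeartbeats 1000000

lemma aux_cs_general {E : Type*} [AddCommGroup E] [Module ℝ E] [SMul 𝔄ᵐᵒᵖ E]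
    (B : E → E → 𝔄)
    (hadd : ∀ x y z, B x (y + z) = B x y + B x z)
    (hop : ∀ (a : 𝔄) x y, B x (y <• a) = B x y * a)
    (hreal : ∀ (r : ℝ) x y, B x (r • y) = r • B x y)
    (hstar : ∀ x y, star (B x y) = B y x)
    (hpos : ∀ x, 0 ≤ B x x) (x y : E) :
    ‖B x y‖ ^ 2 ≤ ‖B x x‖ * ‖B y y‖ := by
  have hsubR : ∀ x y z, B x (y - z) = B x y - B x z := fun x y z =>
    map_sub (AddMonoidHom.mk' (B x) (hadd x)) y z
  have hsubL : ∀ x y z, B (x - y) z = B x z - B y z := by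
    intro x y z; rw [← hstar, hsubR, star_sub, hstar, hstar]
  have hopL : ∀ (a : 𝔄) x y, B (x <• a) y = star a * B x y := by
    intro a x y; rw [← hstar, hop, star_mul, hstar]
  have hrealL : ∀ (r : ℝ) x y, B (r • x) y = r • B x y := by
    intro r x y; rw [← hstar, hreal, star_smul, hstar, star_trivial]
  set a := B x y with ha
  have hyx : B y x = star a := (hstar x y).symm
  have key : ∀ c : ℝ, 0 < c → ‖B x x‖ ≤ c → ‖a‖ ^ 2 ≤ c * ‖B y y‖ := by
    intro c hc hN
    have h0 := hpos (x <• a - c • y)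
    simp only [hsubL, hsubR, hopL, hop, hrealL, hreal, hyx, ← ha, mul_smul_comm] at h0
    rw [smul_mul_assoc] at h0
    have hsa : IsSelfAdjoint (B x x) := hstar x x
    have hconj : star a * B x x * a ≤ c • (star a * a) :=
      (CStarAlgebra.star_left_conjugate_le_norm_smul (a := a) hsa).trans
        (smul_le_smul_of_nonneg_right hN (star_mul_self_nonneg a))
    have h1 : 0 ≤ (c • (star a * a) - star a * B x x * a) +
        (star a * (B x x * a) - c • (star a * a) - (c • (star a * a) - c • c • B y y)) :=
      add_nonneg (sub_nonneg.2 hconj) h0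
    have h2 : c • (star a * a) ≤ c • (c • B y y) := by
      rw [← sub_nonneg]
      convert h1 using 1
      rw [mul_assoc]; abel
    have h3 : star a * a ≤ c • B y y := (smul_le_smul_iff_of_pos_left hc).mp h2
    have h4 := CStarAlgebra.norm_le_norm_of_nonneg_of_le (star_mul_self_nonneg a) h3
    rw [CStarRing.norm_star_mul_self, norm_smul, Real.norm_of_nonneg hc.le] at h4
    nlinarith
  apply le_of_forall_pos_le_add
  intro ε hε
  have hM : 0 ≤ ‖B y y‖ := norm_nonneg _
  have hk := key (‖B x x‖ + ε / (‖B y y‖ + 1)) (by positivity)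
    (by have : 0 < ε / (‖B y y‖ + 1) := by positivity
        linarith)
  have h5 : ε / (‖B y y‖ + 1) * ‖B y y‖ ≤ ε := by
    rw [div_mul_eq_mul_div, div_le_iff₀ (by positivity)]; nlinarith
  nlinarith

namespace CStarModuleRight

lemma inner_sub_right {A E : Type*} [CStarAlgebra A] [PartialOrder A] [StarOrderedRing A]
    [NormedAddCommGroup E] [NormedSpace ℂ E] [Module Aᵐᵒᵖ E] [CStarModuleRight A E]
    {x y z : E} : ⟪x, y - z⟫_A = ⟪x, y⟫_A - ⟪x, z⟫_A :=
  map_sub (AddMonoidHom.mk' (fun y => ⟪x, y⟫_A) (fun _ _ => CStarModuleRight.inner_add_right)) y z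

lemma inner_op_smul_left {A E : Type*} [CStarAlgebra A] [PartialOrder A] [StarOrderedRing A]
    [NormedAddCommGroup E] [NormedSpace ℂ E] [Module Aᵐᵒᵖ E] [CStarModuleRight A E]
    {a : A} {x y : E} : ⟪x <• a, y⟫_A = star a * ⟪x, y⟫_A := by
  rw [← CStarModuleRight.star_inner, CStarModuleRight.inner_op_smul_right, star_mul,
    CStarModuleRight.star_inner]

lemma norm_sq_eq {A E : Type*} [CStarAlgebra A] [PartialOrder A] [StarOrderedRing A]
    [NormedAddCommGroup E] [NormedSpace ℂ E] [Module Aᵐᵒᵖ E] [CStarModuleRight A E]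
    {x : E} : ‖x‖ ^ 2 = ‖⟪x, x⟫_A‖ := by
  rw [CStarModuleRight.norm_eq_sqrt_norm_inner_self (A := A) x, Real.sq_sqrt (norm_nonneg _)]

lemma inner_sum_right {A E : Type*} [CStarAlgebra A] [PartialOrder A] [StarOrderedRing A]
    [NormedAddCommGroup E] [NormedSpace ℂ E] [Module Aᵐᵒᵖ E] [CStarModuleRight A E]
    {ι : Type*} {s : Finset ι} {x : E} {y : ι → E} :
    ⟪x, ∑ i ∈ s, y i⟫_A = ∑ i ∈ s, ⟪x, y i⟫_A :=
  map_sum (AddMonoidHom.mk' (fun y => ⟪x, y⟫_A) (fun _ _ => CStarModuleRight.inner_add_right)) y s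

lemma norm_inner_le {A E : Type*} [CStarAlgebra A] [PartialOrder A] [StarOrderedRing A]
    [NormedAddCommGroup E] [NormedSpace ℂ E] [Module Aᵐᵒᵖ E] [CStarModuleRight A E]
    (x y : E) : ‖⟪x, y⟫_A‖ ≤ ‖x‖ * ‖y‖ := by
  have h := aux_cs_general (fun x y : E => ⟪x, y⟫_A)
    (fun _ _ _ => CStarModuleRight.inner_add_right)
    (fun _ _ _ => CStarModuleRight.inner_op_smul_right)
    (fun r x y => by
      rw [← Complex.coe_smul, CStarModuleRight.inner_smul_right_complex, Complex.coe_smul])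
    (fun x y => CStarModuleRight.star_inner x y)
    (fun _ => CStarModuleRight.inner_self_nonneg) x y
  rw [← norm_sq_eq, ← norm_sq_eq] at h
  have h2 : ‖⟪x, y⟫_A‖ ^ 2 ≤ (‖x‖ * ‖y‖) ^ 2 := by rw [mul_pow]; exact h
  exact (pow_le_pow_iff_left₀ (norm_nonneg _) (by positivity) two_ne_zero).mp h2

/-- The continuous `ℂ`-linear map `y ↦ ⟪x, y⟫`. -/
noncomputable def innerSL {A E : Type*} [CStarAlgebra A] [PartialOrder A] [StarOrderedRing A]
    [NormedAddCommGroup E] [NormedSpace ℂ E] [Module Aᵐᵒᵖ E] [CStarModuleRight A E]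
    (x : E) : E →L[ℂ] A :=
  LinearMap.mkContinuous
    { toFun := fun y => ⟪x, y⟫_A
      map_add' := fun _ _ => CStarModuleRight.inner_add_right
      map_smul' := fun _ _ => CStarModuleRight.inner_smul_right_complex }
    ‖x‖ (fun y => norm_inner_le x y)

lemma innerSL_apply {A E : Type*} [CStarAlgebra A] [PartialOrder A] [StarOrderedRing A]
    [NormedAddCommGroup E] [NormedSpace ℂ E] [Module Aᵐᵒᵖ E] [CStarModuleRight A E]
    {x y : E} : innerSL (A := A) x y = ⟪x, y⟫_A := rfl

end CStarModuleRight

lemma aux_inner_ext {u v : H} (h : ∀ z : H, ⟪z, u⟫_𝔄 = ⟪z, v⟫_𝔄) : u = v := by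
  have h2 : ⟪u - v, u - v⟫_𝔄 = 0 := by
    rw [CStarModuleRight.inner_sub_right, h (u - v), sub_self]
  exact sub_eq_zero.mp (CStarModuleRight.inner_self.mp h2)

lemma aux_smul_op_smul (c : ℂ) (h : H) (a : 𝔄) : (c • h) <• a = c • (h <• a) := by
  refine aux_inner_ext (𝔄 := 𝔄) fun z => ?_
  rw [CStarModuleRight.inner_op_smul_right, CStarModuleRight.inner_smul_right_complex,
    CStarModuleRight.inner_smul_right_complex, CStarModuleRight.inner_op_smul_right, smul_mul_assoc]

lemma aux_op_smul_op_smul (h : H) (a b : 𝔄) : (h <• a) <• b = h <• (a * b) := by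
  show MulOpposite.op b • MulOpposite.op a • h = _
  rw [smul_smul, ← MulOpposite.op_mul]

lemma aux_norm_inner_op_smul_self (x : H) (b : 𝔄) :
    ‖⟪x <• b, x <• b⟫_𝔄‖ ≤ ‖b‖ ^ 2 * ‖x‖ ^ 2 := by
  rw [CStarModuleRight.inner_op_smul_left, CStarModuleRight.inner_op_smul_right]
  calc ‖star b * (⟪x, x⟫_𝔄 * b)‖ ≤ ‖star b‖ * ‖⟪x, x⟫_𝔄 * b‖ := norm_mul_le _ _
    _ ≤ ‖star b‖ * (‖⟪x, x⟫_𝔄‖ * ‖b‖) := by gcongr; exact norm_mul_le _ _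
    _ = ‖b‖ ^ 2 * ‖x‖ ^ 2 := by
        rw [norm_star, ← CStarModuleRight.norm_sq_eq]; ring

lemma aux_norm_op_smul (x : H) (b : 𝔄) : ‖x <• b‖ ≤ ‖x‖ * ‖b‖ := by
  have h := aux_norm_inner_op_smul_self x b
  rw [← CStarModuleRight.norm_sq_eq] at h
  have h2 : ‖x <• b‖ ^ 2 ≤ (‖x‖ * ‖b‖) ^ 2 := by nlinarith
  exact (pow_le_pow_iff_left₀ (norm_nonneg _) (by positivity) two_ne_zero).mp h2

lemma aux_cs_fin {ι : Type*} [Fintype ι] (u v : ι → H) :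
    ‖∑ i, ⟪u i, v i⟫_𝔄‖ ≤ √‖∑ i, ⟪u i, u i⟫_𝔄‖ * √‖∑ i, ⟪v i, v i⟫_𝔄‖ := by
  have h := aux_cs_general (E := ι → H) (fun u v => ∑ i, ⟪u i, v i⟫_𝔄)
    (fun _ _ _ => by simp only [Pi.add_apply, CStarModuleRight.inner_add_right,
      Finset.sum_add_distrib])
    (fun a x y => by
      simp only [Finset.sum_mul]
      exact Finset.sum_congr rfl fun i _ => CStarModuleRight.inner_op_smul_right)
    (fun r x y => by
      simp only [Finset.smul_sum]
      refine Finset.sum_congr rfl fun i _ => ?_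
      rw [Pi.smul_apply, ← Complex.coe_smul, CStarModuleRight.inner_smul_right_complex,
        Complex.coe_smul])
    (fun x y => by simp only [star_sum, CStarModuleRight.star_inner])
    (fun x => Finset.sum_nonneg fun i _ => CStarModuleRight.inner_self_nonneg) u v
  rw [← Real.sqrt_mul (norm_nonneg _), ← Real.sqrt_sq (norm_nonneg (∑ i, ⟪u i, v i⟫_𝔄))]
  exact Real.sqrt_le_sqrt h

lemma aux_cs_finset (t : Finset ℕ) (u v : ℕ → H) :
    ‖∑ n ∈ t, ⟪u n, v n⟫_𝔄‖ ≤ √‖∑ n ∈ t, ⟪u n, u n⟫_𝔄‖ * √‖∑ n ∈ t, ⟪v n, v n⟫_𝔄‖ := by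
  rw [← Finset.sum_coe_sort t (fun n => ⟪u n, v n⟫_𝔄),
    ← Finset.sum_coe_sort t (fun n => ⟪u n, u n⟫_𝔄),
    ← Finset.sum_coe_sort t (fun n => ⟪v n, v n⟫_𝔄)]
  exact aux_cs_fin _ _


/-- Theorem 3.4 (first part): if `((ℌ_n, ω_n))_n` is a *-fusion frame of `H`, then the frame
operator `S : H → H`, `x ↦ ∑_n ω_n² • P_{ℌ_n} x`, is a well-defined bounded `𝔄`-linear
self-adjoint positive operator, and `S = 𝒯* 𝒯` where `𝒯` is the synthesis operator. -/
theorem fusionFrame_frameOperator_wellDefined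
    (P : ℕ → H →L[ℂ] H) (ℌ : ℕ → Submodule 𝔄ᵐᵒᵖ H) (ω : ℕ → 𝔄)
    (hproj : ∀ n, IsOrthoProjectionOnto (P n) (ℌ n))
    (hw : IsWeight ω) (hframe : IsFusionFrame P ω)
    (S : H → H) (hS : ∀ x, S x = ∑' n, (P n x) <• (ω n ^ 2)) :
    -- well-defined: the series converges for every `x`
    (∀ x : H, Summable (fun n => (P n x) <• (ω n ^ 2))) ∧
    -- bounded
    (∃ C : ℝ, 0 < C ∧ ∀ x : H, ‖S x‖ ≤ C * ‖x‖) ∧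
    -- additive and `𝔄`-linear (and `ℂ`-linear)
    (∀ x y : H, S (x + y) = S x + S y) ∧
    (∀ (c : ℂ) (x : H), S (c • x) = c • S x) ∧
    (∀ (a : 𝔄) (x : H), S (x <• a) = (S x) <• a) ∧
    -- self-adjoint
    (∀ x y : H, ⟪S x, y⟫_𝔄 = ⟪x, S y⟫_𝔄) ∧
    -- positive
    (∀ x : H, 0 ≤ ⟪x, S x⟫_𝔄) ∧
    -- `S = 𝒯* 𝒯`
    (∀ x y : H, ⟪x, S y⟫_𝔄 = ∑' n, ⟪(P n x) <• ω n, (P n y) <• ω n⟫_𝔄) := by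
  obtain ⟨A, B, _, _, hfr⟩ := hframe
  have hsum : ∀ x : H, Summable (fun n => ω n ^ 2 * ⟪P n x, P n x⟫_𝔄) := fun x => (hfr x).1
  have hub : ∀ x : H, (∑' n, ω n ^ 2 * ⟪P n x, P n x⟫_𝔄) ≤ ⟪x <• B, x <• B⟫_𝔄 :=
    fun x => (hfr x).2.2
  have hωs : ∀ n, star (ω n) = ω n := fun n =>
    (IsSelfAdjoint.of_nonneg (hw n).2.1 : star (ω n) = ω n)
  have hωc : ∀ n (a : 𝔄), ω n * a = a * ω n := fun n a =>
    (Set.mem_center_iff.mp (hw n).1).comm a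
  have hω2c : ∀ n (a : 𝔄), ω n ^ 2 * a = a * ω n ^ 2 := by
    intro n a
    have h : Commute (ω n) a := hωc n a
    exact h.pow_left 2
  have hPP : ∀ n (z x : H), ⟪z, P n x⟫_𝔄 = ⟪P n z, P n x⟫_𝔄 := by
    intro n z x
    have h := (hproj n).2.2.1 z (P n x)
    rw [(hproj n).2.1 x] at h
    exact h.symm
  have hterm : ∀ n (z x : H), ⟪z, P n x <• (ω n ^ 2)⟫_𝔄 = ω n ^ 2 * ⟪P n z, P n x⟫_𝔄 := by
    intro n z x
    rw [CStarModuleRight.inner_op_smul_right, hPP n z x, ← hω2c]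
  have huu : ∀ n (z x : H), ⟪P n z <• ω n, P n x <• ω n⟫_𝔄 = ω n ^ 2 * ⟪P n z, P n x⟫_𝔄 := by
    intro n z x
    rw [CStarModuleRight.inner_op_smul_left, CStarModuleRight.inner_op_smul_right, hωs n,
      ← hωc n, ← mul_assoc, ← pow_two]
  have hgnn : ∀ (x : H) n, 0 ≤ ω n ^ 2 * ⟪P n x, P n x⟫_𝔄 := fun x n =>
    huu n x x ▸ CStarModuleRight.inner_self_nonneg
  have hgnorm : ∀ (x : H) (t : Finset ℕ),
      ‖∑ n ∈ t, ω n ^ 2 * ⟪P n x, P n x⟫_𝔄‖ ≤ ‖B‖ ^ 2 * ‖x‖ ^ 2 := by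
    intro x t
    have h1 := Summable.sum_le_tsum t (fun n _ => hgnn x n) (hsum x)
    have h3 := CStarAlgebra.norm_le_norm_of_nonneg_of_le
      (Finset.sum_nonneg fun n _ => hgnn x n) (h1.trans (hub x))
    exact h3.trans (aux_norm_inner_op_smul_self x B)
  have hkey : ∀ (x : H) (t : Finset ℕ),
      ‖∑ n ∈ t, P n x <• (ω n ^ 2)‖ ≤ ‖B‖ * √‖∑ n ∈ t, ω n ^ 2 * ⟪P n x, P n x⟫_𝔄‖ := by
    intro x t
    set s : H := ∑ n ∈ t, P n x <• (ω n ^ 2) with hs_def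
    have h0 : ⟪s, s⟫_𝔄 = ∑ n ∈ t, ω n ^ 2 * ⟪P n s, P n x⟫_𝔄 := by
      have h := CStarModuleRight.inner_sum_right (A := 𝔄) (s := t) (x := s)
        (y := fun n => P n x <• (ω n ^ 2))
      rw [← hs_def] at h
      simp only [hterm] at h
      exact h
    have hcs := aux_cs_finset (𝔄 := 𝔄) t (fun n => P n s <• ω n) (fun n => P n x <• ω n)
    simp only [huu] at hcs
    have h1 : ‖s‖ ^ 2 ≤ √‖∑ n ∈ t, ω n ^ 2 * ⟪P n s, P n s⟫_𝔄‖ *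
        √‖∑ n ∈ t, ω n ^ 2 * ⟪P n x, P n x⟫_𝔄‖ := by
      rw [CStarModuleRight.norm_sq_eq (A := 𝔄), h0]; exact hcs
    have h2 : √‖∑ n ∈ t, ω n ^ 2 * ⟪P n s, P n s⟫_𝔄‖ ≤ ‖B‖ * ‖s‖ := by
      refine (Real.sqrt_le_sqrt (hgnorm s t)).trans ?_
      rw [show ‖B‖ ^ 2 * ‖s‖ ^ 2 = (‖B‖ * ‖s‖) ^ 2 by ring, Real.sqrt_sq (by positivity)]
    rcases (norm_nonneg s).eq_or_lt with h | h
    · rw [← h]; positivity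
    · have h3 : ‖s‖ * ‖s‖ ≤ (‖B‖ * √‖∑ n ∈ t, ω n ^ 2 * ⟪P n x, P n x⟫_𝔄‖) * ‖s‖ := by
        calc ‖s‖ * ‖s‖ = ‖s‖ ^ 2 := (sq ‖s‖).symm
          _ ≤ √‖∑ n ∈ t, ω n ^ 2 * ⟪P n s, P n s⟫_𝔄‖ *
              √‖∑ n ∈ t, ω n ^ 2 * ⟪P n x, P n x⟫_𝔄‖ := h1
          _ ≤ (‖B‖ * ‖s‖) * √‖∑ n ∈ t, ω n ^ 2 * ⟪P n x, P n x⟫_𝔄‖ := by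
              gcongr
          _ = (‖B‖ * √‖∑ n ∈ t, ω n ^ 2 * ⟪P n x, P n x⟫_𝔄‖) * ‖s‖ := by ring
      exact le_of_mul_le_mul_right h3 h
  have hsummable : ∀ x : H, Summable (fun n => P n x <• (ω n ^ 2)) := by
    intro x
    rw [summable_iff_vanishing_norm]
    intro ε hε
    have hB1 : (0 : ℝ) < ‖B‖ + 1 := by positivity
    obtain ⟨s₀, hs₀⟩ := summable_iff_vanishing_norm.mp (hsum x) ((ε / (‖B‖ + 1)) ^ 2)
      (by positivity)
    refine ⟨s₀, fun t ht => ?_⟩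
    have h2 := hs₀ t ht
    calc ‖∑ n ∈ t, P n x <• (ω n ^ 2)‖
        ≤ ‖B‖ * √‖∑ n ∈ t, ω n ^ 2 * ⟪P n x, P n x⟫_𝔄‖ := hkey x t
      _ ≤ ‖B‖ * (ε / (‖B‖ + 1)) := by
          gcongr
          refine (Real.sqrt_le_sqrt h2.le).trans ?_
          rw [Real.sqrt_sq (by positivity)]
      _ < ε := by
          rw [mul_div_assoc']
          rw [div_lt_iff₀ hB1]
          nlinarith [norm_nonneg B]
  have hhs : ∀ x : H, HasSum (fun n => P n x <• (ω n ^ 2)) (S x) := fun x =>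
    (hS x) ▸ (hsummable x).hasSum
  have hS_inner : ∀ x y : H, ⟪x, S y⟫_𝔄 = ∑' n, ω n ^ 2 * ⟪P n x, P n y⟫_𝔄 := by
    intro x y
    have h := (hhs y).mapL (CStarModuleRight.innerSL (A := 𝔄) x)
    have h2 := h.tsum_eq.symm
    simpa only [CStarModuleRight.innerSL_apply, hterm] using h2
  refine ⟨hsummable, ?_, ?_, ?_, ?_, ?_, ?_, ?_⟩
  · -- bounded
    refine ⟨‖B‖ ^ 2 + 1, by positivity, fun x => ?_⟩
    have hb : ∀ t : Finset ℕ, ‖∑ n ∈ t, P n x <• (ω n ^ 2)‖ ≤ ‖B‖ ^ 2 * ‖x‖ := by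
      intro t
      refine (hkey x t).trans ?_
      calc ‖B‖ * √‖∑ n ∈ t, ω n ^ 2 * ⟪P n x, P n x⟫_𝔄‖
          ≤ ‖B‖ * √(‖B‖ ^ 2 * ‖x‖ ^ 2) := by
            gcongr
            exact hgnorm x t
        _ = ‖B‖ ^ 2 * ‖x‖ := by
            rw [show ‖B‖ ^ 2 * ‖x‖ ^ 2 = (‖B‖ * ‖x‖) ^ 2 by ring,
              Real.sqrt_sq (by positivity)]; ring
    have ht : Filter.Tendsto (fun t : Finset ℕ => ‖∑ n ∈ t, P n x <• (ω n ^ 2)‖)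
        Filter.atTop (nhds ‖S x‖) := (Filter.Tendsto.norm (hhs x))
    have := le_of_tendsto ht (Filter.Eventually.of_forall hb)
    nlinarith [norm_nonneg x, norm_nonneg (S x)]
  · -- additive
    intro x y
    rw [hS (x + y)]
    have he : (fun n => P n (x + y) <• (ω n ^ 2))
        = fun n => (P n x <• (ω n ^ 2)) + (P n y <• (ω n ^ 2)) := by
      funext n; rw [map_add, smul_add]
    rw [he]
    exact ((hhs x).add (hhs y)).tsum_eq
  · -- ℂ-linear
    intro c x
    rw [hS (c • x)]
    have he : (fun n => P n (c • x) <• (ω n ^ 2))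
        = fun n => c • (P n x <• (ω n ^ 2)) := by
      funext n; rw [map_smul, aux_smul_op_smul]
    rw [he]
    exact ((hhs x).const_smul c).tsum_eq
  · -- 𝔄-linear
    intro a x
    have hφc : Continuous (fun y : H => y <• a) := by
      refine (LipschitzWith.of_dist_le_mul (K := ‖a‖₊) fun y z => ?_).continuous
      have hyz : y <• a - z <• a = (y - z) <• a := (smul_sub (MulOpposite.op a) y z).symm
      rw [dist_eq_norm, dist_eq_norm, hyz]
      calc ‖(y - z) <• a‖ ≤ ‖y - z‖ * ‖a‖ := aux_norm_op_smul _ _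
        _ = ↑‖a‖₊ * ‖y - z‖ := by rw [coe_nnnorm]; ring
    have hmap := HasSum.map (hhs x)
      (AddMonoidHom.mk' (fun y : H => y <• a) (fun y z => smul_add (MulOpposite.op a) y z)) hφc
    rw [hS (x <• a)]
    have he : (fun n => P n (x <• a) <• (ω n ^ 2))
        = fun n => (P n x <• (ω n ^ 2)) <• a := by
      funext n
      rw [(hproj n).1 a x, aux_op_smul_op_smul, aux_op_smul_op_smul, ← hω2c n a]
    rw [he]
    exact hmap.tsum_eq
  · -- self-adjoint
    intro x y
    rw [← CStarModuleRight.star_inner, hS_inner y x, tsum_star, hS_inner x y]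
    refine tsum_congr fun n => ?_
    rw [star_mul, CStarModuleRight.star_inner, star_pow, hωs n, ← hω2c n]
  · -- positive
    intro x
    rw [hS_inner x x]
    exact tsum_nonneg fun n => hgnn x n
  · -- T*T
    intro x y
    rw [hS_inner x y]
    exact tsum_congr fun n => (huu n x y).symm
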